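/- Let n ≥ 2, let λ, ν ∈ ℂ with ν − λ a nonnegative integer, and let 1 ≤ p ≤ n−1. Then x_p²·𝒦_{λ−1,ν+1} = 4 ∂_p² 𝒦_{λ+1,ν−1} + 2 𝒦_{λ,ν} as tempered distributions on ℝ^n. -/

import Mathlib

open scoped ContDiff


/-- Partial derivative ∂_p of a complex-valued function on ℝ^n. -/
noncomputable def pd {n : ℕ} (p : Fin n) (f : (Fin n → ℝ) → ℂ) : (Fin n → ℝ) → ℂ :=
  fun x => fderiv ℝ f x (Pi.single p 1)

/-- Δ' = ∂_1² + ⋯ + ∂_{n−1}², the Laplacian in the first n−1 variables on ℝ^n. -/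
noncomputable def lapP {n : ℕ} (f : (Fin n → ℝ) → ℂ) : (Fin n → ℝ) → ℂ :=
  fun x => ∑ j ∈ Finset.univ.filter (fun j : Fin n => (j : ℕ) < n - 1), pd j (pd j f) x

/-- ∂_n, the partial derivative in the last variable on ℝ^n. -/
noncomputable def pdLast {n : ℕ} (f : (Fin n → ℝ) → ℂ) : (Fin n → ℝ) → ℂ :=
  if h : 0 < n then pd ⟨n - 1, by omega⟩ f else 0

/-- The coefficient of z^{l−2k} in the renormalized Gegenbauer polynomial
C̃_l^α(z) = Σ_{k=0}^{⌊l/2⌋} (−1)^k (∏_{m=⌊(l+1)/2⌋}^{l−k−1}(α+m)) (2z)^{l−2k}/(k!(l−2k)!). -/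
noncomputable def gegenCoeff (α : ℂ) (l k : ℕ) : ℂ :=
  (-1 : ℂ) ^ k * (∏ m ∈ Finset.Ico ((l + 1) / 2) (l - k), (α + (m : ℂ))) *
    2 ^ (l - 2 * k) / ((Nat.factorial k : ℂ) * (Nat.factorial (l - 2 * k) : ℂ))

/-- The action on a test function `φ` of the tempered distribution
`𝒦_{λ,ν} = Σ_{k=0}^{⌊l/2⌋} a_k (−1)^k (Δ')^k ∂_n^{l−2k} δ` on ℝ^n, where `l = ν − λ`
and `a_k` are the coefficients of `C̃_l^{λ−(n−1)/2}`; each `∂` contributes a sign `−1`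
and δ evaluates at 0.  By convention `𝒦_{λ,ν} = 0` when `l < 0`. -/
noncomputable def Kact (n : ℕ) (lam : ℂ) (l : ℤ) (φ : (Fin n → ℝ) → ℂ) : ℂ :=
  if 0 ≤ l then
    ∑ k ∈ Finset.range (l.toNat / 2 + 1),
      gegenCoeff (lam - ((n : ℂ) - 1) / 2) l.toNat k *
        ((-1 : ℂ) ^ k * ((-1 : ℂ) ^ (l.toNat - 2 * k) *
          (pdLast (n := n))^[l.toNat - 2 * k] ((lapP (n := n))^[k] φ) 0))
  else 0

/-- γ(μ, a) := 1 if a is odd, μ + a/2 if a is even. -/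
noncomputable def gam (mu : ℂ) (a : ℕ) : ℂ := if a % 2 = 1 then 1 else mu + ((a / 2 : ℕ) : ℂ)


namespace Aux
variable {n : ℕ}

lemma one_le_inf : (∞ : WithTop ℕ∞) ≠ 0 := by simp
lemma inf_add_one_le : (∞ : WithTop ℕ∞) + 1 ≤ ∞ := by exact_mod_cast le_top

lemma contDiff_pd {f : (Fin n → ℝ) → ℂ} (hf : ContDiff ℝ ∞ f) (q : Fin n) :
    ContDiff ℝ ∞ (pd q f) := by
  have : pd q f = fun x =>
      (ContinuousLinearMap.apply ℝ ℂ ((Pi.single q 1 : Fin n → ℝ))) (fderiv ℝ f x) := rfl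
  rw [this]
  exact (ContinuousLinearMap.apply ℝ ℂ _).contDiff.comp (hf.fderiv_right Aux.inf_add_one_le)

lemma pd_add {f g : (Fin n → ℝ) → ℂ} (hf : ContDiff ℝ ∞ f) (hg : ContDiff ℝ ∞ g) (q : Fin n) :
    pd q (fun x => f x + g x) = fun x => pd q f x + pd q g x := by
  funext x
  simp only [pd]
  rw [fderiv_fun_add (hf.differentiable Aux.one_le_inf x) (hg.differentiable Aux.one_le_inf x)]
  simp

lemma pd_smul (c : ℂ) {f : (Fin n → ℝ) → ℂ} (hf : ContDiff ℝ ∞ f) (q : Fin n) :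
    pd q (fun x => c * f x) = fun x => c * pd q f x := by
  funext x
  simp only [pd]
  rw [fderiv_const_mul (hf.differentiable Aux.one_le_inf x)]
  simp

lemma pd_mul {f g : (Fin n → ℝ) → ℂ} (hf : ContDiff ℝ ∞ f) (hg : ContDiff ℝ ∞ g) (q : Fin n) :
    pd q (fun x => f x * g x) = fun x => pd q f x * g x + f x * pd q g x := by
  funext x
  simp only [pd]
  rw [fderiv_fun_mul (hf.differentiable Aux.one_le_inf x) (hg.differentiable Aux.one_le_inf x)]
  simp
  ring

lemma pd_snd {f : (Fin n → ℝ) → ℂ} (hf : ContDiff ℝ ∞ f) (v : Fin n → ℝ) (q : Fin n) (x) :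
    fderiv ℝ (fun y => fderiv ℝ f y v) x (Pi.single q 1)
      = fderiv ℝ (fderiv ℝ f) x (Pi.single q 1) v := by
  have hc : DifferentiableAt ℝ (fderiv ℝ f) x :=
    ((hf.fderiv_right Aux.inf_add_one_le).differentiable Aux.one_le_inf) x
  rw [fderiv_clm_apply hc (differentiableAt_const v)]
  simp

lemma pd_comm {f : (Fin n → ℝ) → ℂ} (hf : ContDiff ℝ ∞ f) (q r : Fin n) :
    pd q (pd r f) = pd r (pd q f) := by
  funext x
  have h1 : pd q (pd r f) x = fderiv ℝ (fderiv ℝ f) x (Pi.single q 1) (Pi.single r 1) :=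
    pd_snd hf _ q x
  have h2 : pd r (pd q f) x = fderiv ℝ (fderiv ℝ f) x (Pi.single r 1) (Pi.single q 1) :=
    pd_snd hf _ r x
  rw [h1, h2]
  exact second_derivative_symmetric (fun y => ((hf.differentiable Aux.one_le_inf) y).hasFDerivAt)
    (((hf.fderiv_right Aux.inf_add_one_le).differentiable Aux.one_le_inf x).hasFDerivAt) _ _

lemma pd_sum {ι : Type*} (s : Finset ι) (F : ι → (Fin n → ℝ) → ℂ)
    (hF : ∀ i ∈ s, ContDiff ℝ ∞ (F i)) (q : Fin n) :
    pd q (fun x => ∑ i ∈ s, F i x) = fun x => ∑ i ∈ s, pd q (F i) x := by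
  funext x
  simp only [pd]
  rw [fderiv_fun_sum (fun i hi => ((hF i hi).differentiable Aux.one_le_inf x))]
  simp

/-- The index set for lapP. -/
def S (n : ℕ) : Finset (Fin n) := Finset.univ.filter (fun j : Fin n => (j : ℕ) < n - 1)

lemma lapP_eq (f : (Fin n → ℝ) → ℂ) : lapP f = fun x => ∑ j ∈ S n, pd j (pd j f) x := rfl

lemma contDiff_lapP {f : (Fin n → ℝ) → ℂ} (hf : ContDiff ℝ ∞ f) : ContDiff ℝ ∞ (lapP f) := by
  rw [lapP_eq]
  exact ContDiff.sum fun j _ => contDiff_pd (contDiff_pd hf j) j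

lemma lapP_add {f g : (Fin n → ℝ) → ℂ} (hf : ContDiff ℝ ∞ f) (hg : ContDiff ℝ ∞ g) :
    lapP (fun x => f x + g x) = fun x => lapP f x + lapP g x := by
  funext x
  simp only [lapP_eq]
  rw [← Finset.sum_add_distrib]
  refine Finset.sum_congr rfl fun j _ => ?_
  rw [pd_add hf hg j, pd_add (contDiff_pd hf j) (contDiff_pd hg j) j]

lemma lapP_smul (c : ℂ) {f : (Fin n → ℝ) → ℂ} (hf : ContDiff ℝ ∞ f) :
    lapP (fun x => c * f x) = fun x => c * lapP f x := by
  funext x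
  simp only [lapP_eq]
  rw [Finset.mul_sum]
  refine Finset.sum_congr rfl fun j _ => ?_
  rw [pd_smul c hf j, pd_smul c (contDiff_pd hf j) j]

lemma pd_lapP {f : (Fin n → ℝ) → ℂ} (hf : ContDiff ℝ ∞ f) (q : Fin n) :
    pd q (lapP f) = lapP (pd q f) := by
  rw [lapP_eq, pd_sum (S n) _ (fun j _ => contDiff_pd (contDiff_pd hf j) j) q, lapP_eq]
  funext x
  refine Finset.sum_congr rfl fun j _ => ?_
  rw [pd_comm (contDiff_pd hf j) q j, pd_comm hf q j]

end Aux

namespace Aux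
variable {n : ℕ}

/-- coordinate function as CLM -/
noncomputable def XCLM (p : Fin n) : (Fin n → ℝ) →L[ℝ] ℂ :=
  Complex.ofRealCLM.comp (ContinuousLinearMap.proj p)

noncomputable def XF (p : Fin n) : (Fin n → ℝ) → ℂ := fun x => ((x p : ℝ) : ℂ)

lemma XF_eq (p : Fin n) : XF p = ⇑(XCLM p) := rfl

lemma contDiff_XF (p : Fin n) : ContDiff ℝ ∞ (XF p) := by
  rw [XF_eq]; exact (XCLM p).contDiff

lemma pd_XF (q p : Fin n) : pd q (XF p) = fun _ => if p = q then (1 : ℂ) else 0 := by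
  funext x
  simp only [pd, XF_eq, ContinuousLinearMap.fderiv]
  simp [XCLM, Pi.single_apply]
  split <;> simp

lemma contDiff_XF_mul {p : Fin n} {g : (Fin n → ℝ) → ℂ} (hg : ContDiff ℝ ∞ g) :
    ContDiff ℝ ∞ (fun x => XF p x * g x) := (contDiff_XF p).mul hg

lemma pd_XF_mul {p : Fin n} {g : (Fin n → ℝ) → ℂ} (hg : ContDiff ℝ ∞ g) (q : Fin n) :
    pd q (fun x => XF p x * g x)
      = fun x => (if p = q then (1:ℂ) else 0) * g x + XF p x * pd q g x := by
  rw [pd_mul (contDiff_XF p) hg q]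
  funext x
  rw [pd_XF]

lemma mem_S {j : Fin n} : j ∈ S n ↔ (j : ℕ) < n - 1 := by
  simp [S]

/-- Laplacian of XF p * g -/
lemma lapP_XF_mul {p : Fin n} (hp : (p : ℕ) < n - 1) {g : (Fin n → ℝ) → ℂ}
    (hg : ContDiff ℝ ∞ g) :
    lapP (fun x => XF p x * g x) = fun x => XF p x * lapP g x + 2 * pd p g x := by
  funext x
  rw [lapP_eq]
  have key : ∀ j, pd j (pd j (fun x => XF p x * g x)) x
      = XF p x * pd j (pd j g) x + (if p = j then (2:ℂ) * pd p g x else 0) := by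
    intro j
    rw [pd_XF_mul hg j]
    rw [pd_add (ContDiff.mul contDiff_const hg) (contDiff_XF_mul (contDiff_pd hg j)) j]
    rw [pd_smul _ hg j, pd_XF_mul (contDiff_pd hg j) j]
    by_cases h : p = j
    · subst h
      simp only [if_pos rfl, if_pos trivial]
      ring
    · simp only [if_neg h]
      ring
  calc ∑ j ∈ S n, pd j (pd j (fun x => XF p x * g x)) x
      = ∑ j ∈ S n, (XF p x * pd j (pd j g) x + (if p = j then (2:ℂ) * pd p g x else 0)) :=
        Finset.sum_congr rfl fun j _ => key j
    _ = XF p x * lapP g x + 2 * pd p g x := by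
        rw [Finset.sum_add_distrib, Finset.sum_ite_eq (S n) p (fun _ => (2:ℂ) * pd p g x)]
        rw [if_pos (mem_S.2 hp), lapP_eq, Finset.mul_sum]

end Aux

namespace Aux
variable {n : ℕ}

lemma contDiff_lapP_iter {φ : (Fin n → ℝ) → ℂ} (hφ : ContDiff ℝ ∞ φ) (k : ℕ) :
    ContDiff ℝ ∞ (lapP^[k] φ) := by
  induction k with
  | zero => simpa using hφ
  | succ k ih => rw [Function.iterate_succ_apply']; exact contDiff_lapP ih

lemma lapP_X2 {p : Fin n} (hp : (p : ℕ) < n - 1) {g : (Fin n → ℝ) → ℂ}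
    (hg : ContDiff ℝ ∞ g) :
    lapP (fun x => XF p x * (XF p x * g x)) =
      fun x => XF p x * (XF p x * lapP g x) + 4 * (XF p x * pd p g x) + 2 * g x := by
  rw [lapP_XF_mul hp (contDiff_XF_mul hg)]
  funext x
  rw [lapP_XF_mul hp hg, pd_XF_mul hg p]
  simp only [if_pos rfl, if_pos trivial]
  ring

/-- main induction: lapP^[k+1] of x_p^2 * φ -/
lemma lapP_iter_X2 {p : Fin n} (hp : (p : ℕ) < n - 1) {φ : (Fin n → ℝ) → ℂ}
    (hφ : ContDiff ℝ ∞ φ) (k : ℕ) :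
    lapP^[k+1] (fun x => XF p x * (XF p x * φ x)) =
      fun x => XF p x * (XF p x * lapP^[k+1] φ x)
        + ((4*(k+1) : ℕ) : ℂ) * (XF p x * pd p (lapP^[k] φ) x)
        + ((2*(k+1) : ℕ) : ℂ) * lapP^[k] φ x
        + ((4*(k+1)*k : ℕ) : ℂ) * pd p (pd p (lapP^[k-1] φ)) x := by
  have hψ : ∀ j, ContDiff ℝ ∞ (lapP^[j] φ) := contDiff_lapP_iter hφ
  induction k with
  | zero =>
    simp only [zero_add, Function.iterate_one, Function.iterate_zero, id_eq, Nat.zero_sub]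
    rw [lapP_X2 hp hφ]
    funext x
    push_cast
    ring
  | succ k ih =>
    rw [Function.iterate_succ_apply' lapP (k+1), ih]
    have h1 : ContDiff ℝ ∞ (fun x => XF p x * (XF p x * lapP^[k+1] φ x)) :=
      contDiff_XF_mul (contDiff_XF_mul (hψ _))
    have hg2 : ContDiff ℝ ∞ (fun x => XF p x * pd p (lapP^[k] φ) x) :=
      contDiff_XF_mul (contDiff_pd (hψ _) p)
    have h2 : ContDiff ℝ ∞ (fun x => ((4*(k+1) : ℕ) : ℂ) * (XF p x * pd p (lapP^[k] φ) x)) :=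
      contDiff_const.mul hg2
    have h3 : ContDiff ℝ ∞ (fun x => ((2*(k+1) : ℕ) : ℂ) * lapP^[k] φ x) :=
      contDiff_const.mul (hψ _)
    have hg4 : ContDiff ℝ ∞ (pd p (pd p (lapP^[k-1] φ))) :=
      contDiff_pd (contDiff_pd (hψ _) p) p
    have h4 : ContDiff ℝ ∞ (fun x => ((4*(k+1)*k : ℕ) : ℂ) * pd p (pd p (lapP^[k-1] φ)) x) :=
      contDiff_const.mul hg4
    rw [lapP_add ((h1.add h2).add h3) h4, lapP_add (h1.add h2) h3, lapP_add h1 h2,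
      lapP_smul _ hg2, lapP_smul _ (hψ k), lapP_smul _ hg4,
      lapP_X2 hp (hψ (k+1)), lapP_XF_mul hp (contDiff_pd (hψ k) p),
      ← pd_lapP (hψ k) p]
    rw [← Function.iterate_succ_apply' lapP (k+1) φ, ← Function.iterate_succ_apply' lapP k φ]
    funext x
    simp only [Nat.add_sub_cancel, Nat.succ_eq_add_one]
    rcases Nat.eq_zero_or_pos k with hk | hk
    · subst hk
      push_cast
      ring
    · have e : k - 1 + 1 = k := by omega
      rw [← pd_lapP (contDiff_pd (hψ _) p) p, ← pd_lapP (hψ _) p,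
        ← Function.iterate_succ_apply' lapP (k-1) φ]
      simp only [Nat.succ_eq_add_one, e]
      push_cast
      ring
end Aux

namespace Aux
variable {n : ℕ}

lemma pdLast_eq (hn : 0 < n) (f : (Fin n → ℝ) → ℂ) :
    pdLast f = pd (⟨n-1, by omega⟩ : Fin n) f := dif_pos hn

lemma contDiff_pdLast (hn : 0 < n) {f : (Fin n → ℝ) → ℂ} (hf : ContDiff ℝ ∞ f) :
    ContDiff ℝ ∞ (pdLast f) := by
  rw [pdLast_eq hn]; exact contDiff_pd hf _

lemma contDiff_pdLast_iter (hn : 0 < n) {f : (Fin n → ℝ) → ℂ} (hf : ContDiff ℝ ∞ f) (m : ℕ) :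
    ContDiff ℝ ∞ (pdLast^[m] f) := by
  induction m with
  | zero => simpa using hf
  | succ m ih => rw [Function.iterate_succ_apply']; exact contDiff_pdLast hn ih

lemma pdLast_iter_add (hn : 0 < n) {f g : (Fin n → ℝ) → ℂ}
    (hf : ContDiff ℝ ∞ f) (hg : ContDiff ℝ ∞ g) (m : ℕ) :
    pdLast^[m] (fun x => f x + g x) = fun x => pdLast^[m] f x + pdLast^[m] g x := by
  induction m with
  | zero => simp
  | succ m ih =>
    rw [Function.iterate_succ_apply', ih, pdLast_eq hn,
      pd_add (contDiff_pdLast_iter hn hf m) (contDiff_pdLast_iter hn hg m),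
      Function.iterate_succ_apply', Function.iterate_succ_apply', pdLast_eq hn, pdLast_eq hn]

lemma pdLast_iter_smul (hn : 0 < n) (c : ℂ) {f : (Fin n → ℝ) → ℂ}
    (hf : ContDiff ℝ ∞ f) (m : ℕ) :
    pdLast^[m] (fun x => c * f x) = fun x => c * pdLast^[m] f x := by
  induction m with
  | zero => simp
  | succ m ih =>
    rw [Function.iterate_succ_apply', ih, pdLast_eq hn,
      pd_smul c (contDiff_pdLast_iter hn hf m),
      Function.iterate_succ_apply', pdLast_eq hn]

lemma pdLast_XF_mul {p : Fin n} (hp : (p : ℕ) < n - 1) {g : (Fin n → ℝ) → ℂ}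
    (hg : ContDiff ℝ ∞ g) :
    pdLast (fun x => XF p x * g x) = fun x => XF p x * pdLast g x := by
  have hn : 0 < n := p.pos
  rw [pdLast_eq hn, pd_XF_mul hg, pdLast_eq hn]
  have : p ≠ (⟨n-1, by omega⟩ : Fin n) := by
    intro h
    rw [Fin.ext_iff] at h
    simp at h
    omega
  funext x
  rw [if_neg this]
  ring

lemma pdLast_iter_XF_mul {p : Fin n} (hp : (p : ℕ) < n - 1) {g : (Fin n → ℝ) → ℂ}
    (hg : ContDiff ℝ ∞ g) (m : ℕ) :
    pdLast^[m] (fun x => XF p x * g x) = fun x => XF p x * pdLast^[m] g x := by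
  have hn : 0 < n := p.pos
  induction m with
  | zero => simp
  | succ m ih =>
    rw [Function.iterate_succ_apply', ih,
      pdLast_XF_mul hp (contDiff_pdLast_iter hn hg m), Function.iterate_succ_apply']

lemma lapP_iter_pd {f : (Fin n → ℝ) → ℂ} (hf : ContDiff ℝ ∞ f) (q : Fin n) (k : ℕ) :
    lapP^[k] (pd q f) = pd q (lapP^[k] f) := by
  induction k with
  | zero => simp
  | succ k ih =>
    rw [Function.iterate_succ_apply', ih, Function.iterate_succ_apply',
      pd_lapP (contDiff_lapP_iter hf k) q]

/-- key evaluation lemma -/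
lemma key_eval {p : Fin n} (hp : (p : ℕ) < n - 1) {φ : (Fin n → ℝ) → ℂ}
    (hφ : ContDiff ℝ ∞ φ) (m k : ℕ) :
    pdLast^[m] (lapP^[k] (fun x => XF p x * (XF p x * φ x))) 0
      = ((2*k : ℕ) : ℂ) * pdLast^[m] (lapP^[k-1] φ) 0
        + ((4*k*(k-1) : ℕ) : ℂ) * pdLast^[m] (lapP^[k-2] (pd p (pd p φ))) 0 := by
  have hn : 0 < n := p.pos
  have hψ : ∀ j, ContDiff ℝ ∞ (lapP^[j] φ) := contDiff_lapP_iter hφ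
  rcases k with _ | k
  · simp only [Function.iterate_zero, id_eq]
    rw [pdLast_iter_XF_mul hp (contDiff_XF_mul hφ) m]
    simp [XF]
  · rw [lapP_iter_X2 hp hφ k]
    have h1 : ContDiff ℝ ∞ (fun x => XF p x * (XF p x * lapP^[k+1] φ x)) :=
      contDiff_XF_mul (contDiff_XF_mul (hψ _))
    have hg2 : ContDiff ℝ ∞ (fun x => XF p x * pd p (lapP^[k] φ) x) :=
      contDiff_XF_mul (contDiff_pd (hψ _) p)
    have h2 : ContDiff ℝ ∞ (fun x => ((4*(k+1) : ℕ) : ℂ) * (XF p x * pd p (lapP^[k] φ) x)) :=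
      contDiff_const.mul hg2
    have h3 : ContDiff ℝ ∞ (fun x => ((2*(k+1) : ℕ) : ℂ) * lapP^[k] φ x) :=
      contDiff_const.mul (hψ _)
    have hg4 : ContDiff ℝ ∞ (pd p (pd p (lapP^[k-1] φ))) :=
      contDiff_pd (contDiff_pd (hψ _) p) p
    have h4 : ContDiff ℝ ∞ (fun x => ((4*(k+1)*k : ℕ) : ℂ) * pd p (pd p (lapP^[k-1] φ)) x) :=
      contDiff_const.mul hg4
    rw [pdLast_iter_add hn ((h1.add h2).add h3) h4 m, pdLast_iter_add hn (h1.add h2) h3 m,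
      pdLast_iter_add hn h1 h2 m, pdLast_iter_smul hn _ hg2 m, pdLast_iter_smul hn _ (hψ k) m,
      pdLast_iter_smul hn _ hg4 m, pdLast_iter_XF_mul hp (contDiff_XF_mul (hψ (k+1))) m,
      pdLast_iter_XF_mul hp (contDiff_pd (hψ k) p) m]
    have e2 : k + 1 - 2 = k - 1 := by omega
    have e1 : k + 1 - 1 = k := by omega
    rw [e2, e1, lapP_iter_pd (contDiff_pd hφ p) p (k-1), lapP_iter_pd hφ p (k-1)]
    simp [XF]
    try push_cast
    try ring

end Aux

namespace Aux

lemma C1 (α : ℂ) (L j : ℕ) (hj : 2*j ≤ L) :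
    -((j:ℂ)+1) * gegenCoeff (α-1) (L+2) (j+1) = gegenCoeff α L j := by
  unfold gegenCoeff
  have h1 : (L+2+1)/2 = (L+1)/2 + 1 := by omega
  have h2 : L+2-(j+1) = (L-j) + 1 := by omega
  have h3 : L+2-2*(j+1) = L - 2*j := by omega
  rw [h1, h2, h3]
  have hprod : (∏ m ∈ Finset.Ico ((L+1)/2 + 1) ((L-j)+1), (α - 1 + (m:ℂ)))
      = ∏ m ∈ Finset.Ico ((L+1)/2) (L-j), (α + (m:ℂ)) := by
    rw [Finset.prod_Ico_eq_prod_range, Finset.prod_Ico_eq_prod_range]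
    rw [show (L-j)+1 - ((L+1)/2+1) = (L-j) - (L+1)/2 from by omega]
    refine Finset.prod_congr rfl fun i _ => ?_
    push_cast
    ring
  rw [hprod, Nat.factorial_succ]
  have hj0 : ((Nat.factorial j : ℕ) : ℂ) ≠ 0 := Nat.cast_ne_zero.2 (Nat.factorial_ne_zero j)
  have hl0 : ((Nat.factorial (L-2*j) : ℕ) : ℂ) ≠ 0 :=
    Nat.cast_ne_zero.2 (Nat.factorial_ne_zero _)
  have hj1 : ((j:ℂ)+1) ≠ 0 := by
    have h : (((j+1 : ℕ)) : ℂ) ≠ 0 := Nat.cast_ne_zero.2 (Nat.succ_ne_zero j)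
    push_cast at h; exact h
  push_cast
  field_simp
  ring

lemma C2 (α : ℂ) (L j : ℕ) (hj : 2*j + 2 ≤ L) :
    ((j:ℂ)+1) * ((j:ℂ)+2) * gegenCoeff (α-1) (L+2) (j+2) = gegenCoeff (α+1) (L-2) j := by
  unfold gegenCoeff
  have h1 : (L+2+1)/2 = (L-2+1)/2 + 2 := by omega
  have h2 : L+2-(j+2) = ((L-2)-j) + 2 := by omega
  have h3 : L+2-2*(j+2) = (L-2) - 2*j := by omega
  rw [h1, h2, h3]
  have hprod : (∏ m ∈ Finset.Ico ((L-2+1)/2 + 2) (((L-2)-j)+2), (α - 1 + (m:ℂ)))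
      = ∏ m ∈ Finset.Ico ((L-2+1)/2) ((L-2)-j), (α + 1 + (m:ℂ)) := by
    rw [Finset.prod_Ico_eq_prod_range, Finset.prod_Ico_eq_prod_range]
    rw [show ((L-2)-j)+2 - ((L-2+1)/2+2) = ((L-2)-j) - (L-2+1)/2 from by omega]
    refine Finset.prod_congr rfl fun i _ => ?_
    push_cast
    ring
  have hD1 : ((((j+2)*((j+1)*Nat.factorial j) : ℕ)) : ℂ) * ((Nat.factorial ((L-2) - 2*j) : ℕ) : ℂ) ≠ 0 :=
    mul_ne_zero (Nat.cast_ne_zero.2 (by positivity)) (Nat.cast_ne_zero.2 (Nat.factorial_ne_zero _))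
  have hD2 : ((Nat.factorial j : ℕ) : ℂ) * ((Nat.factorial ((L-2) - 2*j) : ℕ) : ℂ) ≠ 0 :=
    mul_ne_zero (Nat.cast_ne_zero.2 (Nat.factorial_ne_zero _)) (Nat.cast_ne_zero.2 (Nat.factorial_ne_zero _))
  rw [hprod, Nat.factorial_succ, Nat.factorial_succ, ← mul_div_assoc,
    div_eq_div_iff hD1 hD2]
  push_cast
  ring

end Aux

namespace Aux
variable {n : ℕ}

lemma sum_split {p : Fin n} (hp : (p : ℕ) < n - 1) {φ : (Fin n → ℝ) → ℂ}
    (hφ : ContDiff ℝ ∞ φ) (c : ℂ) (L : ℕ) :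
    (∑ k ∈ Finset.range (L/2 + 2),
        gegenCoeff c (L+2) k * ((-1:ℂ)^k * ((-1:ℂ)^(L+2-2*k) *
          pdLast^[L+2-2*k] (lapP^[k] (fun x => XF p x * (XF p x * φ x))) 0)))
      = (∑ k ∈ Finset.range (L/2 + 2),
          gegenCoeff c (L+2) k * (-1:ℂ)^k * (-1:ℂ)^(L+2-2*k) * ((2*k : ℕ) : ℂ) *
            pdLast^[L+2-2*k] (lapP^[k-1] φ) 0)
        + (∑ k ∈ Finset.range (L/2 + 2),
          gegenCoeff c (L+2) k * (-1:ℂ)^k * (-1:ℂ)^(L+2-2*k) * ((4*k*(k-1) : ℕ) : ℂ) *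
            pdLast^[L+2-2*k] (lapP^[k-2] (pd p (pd p φ))) 0) := by
  rw [← Finset.sum_add_distrib]
  refine Finset.sum_congr rfl fun k _ => ?_
  rw [key_eval hp hφ (L+2-2*k) k]
  ring

lemma sumA {φ : (Fin n → ℝ) → ℂ} (c : ℂ) (L : ℕ) :
    (∑ k ∈ Finset.range (L/2 + 2),
        gegenCoeff (c-1) (L+2) k * (-1:ℂ)^k * (-1:ℂ)^(L+2-2*k) * ((2*k : ℕ) : ℂ) *
          pdLast^[L+2-2*k] (lapP^[k-1] φ) 0)
      = 2 * ∑ k ∈ Finset.range (L/2 + 1),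
          gegenCoeff c L k * ((-1:ℂ)^k * ((-1:ℂ)^(L-2*k) *
            pdLast^[L-2*k] (lapP^[k] φ) 0)) := by
  rw [Finset.sum_range_succ']
  have h0 : gegenCoeff (c-1) (L+2) 0 * (-1:ℂ)^0 * (-1:ℂ)^(L+2-2*0) * ((2*0 : ℕ) : ℂ) *
      pdLast^[L+2-2*0] (lapP^[0-1] φ) 0 = 0 := by norm_num
  rw [h0, add_zero, Finset.mul_sum]
  refine Finset.sum_congr rfl fun j hj => ?_
  have hjL : 2*j ≤ L := by have := Finset.mem_range.1 hj; omega
  have e1 : L+2-2*(j+1) = L-2*j := by omega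
  have e2 : j+1-1 = j := rfl
  rw [e1, e2, ← C1 c L j hjL]
  push_cast
  ring

lemma sumB (c : ℂ) (L : ℕ) (ψ : (Fin n → ℝ) → ℂ) :
    (∑ k ∈ Finset.range (L/2 + 2),
        gegenCoeff (c-1) (L+2) k * (-1:ℂ)^k * (-1:ℂ)^(L+2-2*k) * ((4*k*(k-1) : ℕ) : ℂ) *
          pdLast^[L+2-2*k] (lapP^[k-2] ψ) 0)
      = 4 * ∑ k ∈ Finset.range (L/2),
          gegenCoeff (c+1) (L-2) k * ((-1:ℂ)^k * ((-1:ℂ)^(L-2-2*k) *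
            pdLast^[L-2-2*k] (lapP^[k] ψ) 0)) := by
  rw [Finset.sum_range_succ', Finset.sum_range_succ']
  have h0 : gegenCoeff (c-1) (L+2) 0 * (-1:ℂ)^0 * (-1:ℂ)^(L+2-2*0) * ((4*0*(0-1) : ℕ) : ℂ) *
      pdLast^[L+2-2*0] (lapP^[0-2] ψ) 0 = 0 := by norm_num
  have h1 : gegenCoeff (c-1) (L+2) (0+1) * (-1:ℂ)^(0+1) * (-1:ℂ)^(L+2-2*(0+1)) *
      ((4*(0+1)*((0+1)-1) : ℕ) : ℂ) * pdLast^[L+2-2*(0+1)] (lapP^[(0+1)-2] ψ) 0 = 0 := by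
    norm_num
  rw [h0, h1, add_zero, add_zero, Finset.mul_sum]
  refine Finset.sum_congr rfl fun j hj => ?_
  have hjL : 2*j + 2 ≤ L := by have := Finset.mem_range.1 hj; omega
  have e1 : L+2-2*(j+1+1) = L-2-2*j := by omega
  have e2 : j+1+1-2 = j := rfl
  have e3 : j+1+1 = j+2 := rfl
  rw [e1, e2, e3, ← C2 c L j hjL]
  push_cast
  ring

end Aux

/-- `x_p²·𝒦_{λ−1,ν+1} = 4 ∂_p² 𝒦_{λ+1,ν−1} + 2 𝒦_{λ,ν}` as tempered distributions on ℝ^n,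
tested against an arbitrary Schwartz function `φ`; `(∂_p² T)(φ) = T(∂_p² φ)`. -/
theorem stmt14 (n : ℕ) (hn : 2 ≤ n) (lam nu : ℂ) (l : ℤ) (hl : 0 ≤ l)
    (hln : nu - lam = (l : ℂ)) (p : Fin n) (hp : (p : ℕ) < n - 1)
    (φ : SchwartzMap (Fin n → ℝ) ℂ) :
    Kact n (lam - 1) (l + 2) (fun x => (((x p) ^ 2 : ℝ) : ℂ) * φ x)
      = 4 * Kact n (lam + 1) (l - 2) (pd p (pd p ⇑φ)) + 2 * Kact n lam l ⇑φ := by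
  have hφs : ContDiff ℝ ∞ (⇑φ) := φ.smooth ⊤
  obtain ⟨L, rfl⟩ : ∃ L : ℕ, l = (L : ℤ) := ⟨l.toNat, by omega⟩
  have hfun : (fun x : Fin n → ℝ => (((x p) ^ 2 : ℝ) : ℂ) * φ x)
      = fun x => Aux.XF p x * (Aux.XF p x * ⇑φ x) := by
    funext x
    simp only [Aux.XF]
    push_cast
    ring
  rw [hfun]
  simp only [Kact]
  rw [if_pos (show (0:ℤ) ≤ (L:ℤ) + 2 by positivity),
    if_pos (show (0:ℤ) ≤ (L:ℤ) by positivity),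
    show ((L:ℤ) + 2).toNat = L + 2 from by omega,
    show ((L:ℤ)).toNat = L from by omega,
    show (L+2)/2 + 1 = L/2 + 2 from by omega,
    show lam - 1 - ((n:ℂ)-1)/2 = lam - ((n:ℂ)-1)/2 - 1 from by ring]
  rw [Aux.sum_split hp hφs (lam - ((n:ℂ)-1)/2 - 1) L,
    Aux.sumA (lam - ((n:ℂ)-1)/2) L, Aux.sumB (lam - ((n:ℂ)-1)/2) L (pd p (pd p ⇑φ))]
  by_cases hL : 2 ≤ L
  · rw [if_pos (show (0:ℤ) ≤ (L:ℤ) - 2 from by omega),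
      show ((L:ℤ) - 2).toNat = L - 2 from by omega,
      show (L-2)/2 + 1 = L/2 from by omega,
      show lam + 1 - ((n:ℂ)-1)/2 = lam - ((n:ℂ)-1)/2 + 1 from by ring]
    ring
  · rw [if_neg (show ¬ (0:ℤ) ≤ (L:ℤ) - 2 from by omega),
      show L/2 = 0 from by omega]
    rw [Finset.range_zero, Finset.sum_empty]
    ring
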